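/- Let P ⊆ C × C be a reflexive transitive relation, Δ ⊆ P, Id the identity, Δ' = (P \ Id) ∪ Δ, I ⊆ C, and L ⊆ C. There exists an infinite Δ'-run starting in I that visits L infinitely often if and only if either (a) there exist c₀ ∈ I and c ∈ L with (c₀,c) ∈ P and (c,c) ∈ Δ ∪ (P \ Id)², or (b) there exists a sequence (cᵢ)_{i≥0} of pairwise distinct configurations with c₀ ∈ I, cᵢ ∈ L for all i ≥ 1, and (cᵢ, cᵢ₊₁) ∈ P for all i ≥ 0. -/

import Mathlib

/-- Characterisation of infinite Δ'-runs visiting L infinitely often, where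
Δ' = (P \ Id) ∪ Δ, P reflexive transitive, Δ ⊆ P: such a run exists iff
(a) there exist c₀ ∈ I and c ∈ L with (c₀,c) ∈ P and (c,c) ∈ Δ ∪ (P \ Id)², or
(b) there is an infinite sequence of pairwise distinct configurations starting in I,
lying in L from index 1 on, with consecutive pairs in P. -/
theorem stmt16 {C : Type*} (P Δ : Set (C × C))
    (hrefl : ∀ c : C, (c, c) ∈ P)
    (htrans : ∀ a b c : C, (a, b) ∈ P → (b, c) ∈ P → (a, c) ∈ P)
    (hsub : Δ ⊆ P) (I L : Set C) :
    (∃ f : ℕ → C, f 0 ∈ I ∧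
        (∀ i, ((f i, f (i + 1)) ∈ P ∧ f i ≠ f (i + 1)) ∨ (f i, f (i + 1)) ∈ Δ) ∧
        {i : ℕ | f i ∈ L}.Infinite) ↔
      ((∃ c₀ ∈ I, ∃ c ∈ L, (c₀, c) ∈ P ∧
          ((c, c) ∈ Δ ∨ ∃ d, ((c, d) ∈ P ∧ c ≠ d) ∧ ((d, c) ∈ P ∧ d ≠ c))) ∨
        (∃ g : ℕ → C, Function.Injective g ∧ g 0 ∈ I ∧ (∀ i, 1 ≤ i → g i ∈ L) ∧
          ∀ i, (g i, g (i + 1)) ∈ P)) := by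
  constructor
  · rintro ⟨f, hf0, hstep, hinf⟩
    have hPstep : ∀ i, (f i, f (i + 1)) ∈ P := fun i =>
      (hstep i).elim (fun h => h.1) (fun h => hsub h)
    have hchain : ∀ i j : ℕ, i ≤ j → (f i, f j) ∈ P := by
      intro i j hij
      induction j with
      | zero =>
        have : i = 0 := Nat.le_zero.mp hij
        subst this; exact hrefl _
      | succ j ih =>
        rcases Nat.lt_or_ge i (j + 1) with h | h
        · exact htrans _ _ _ (ih (Nat.lt_succ_iff.mp h)) (hPstep j)
        · have : i = j + 1 := le_antisymm hij h
          subst this; exact hrefl _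
    by_cases hrep : ∃ i j : ℕ, i < j ∧ f i ∈ L ∧ f i = f j
    · left
      obtain ⟨i, j, hij, hiL, hfij⟩ := hrep
      refine ⟨f 0, hf0, f i, hiL, hchain 0 i (Nat.zero_le _), ?_⟩
      by_cases hd : f (i + 1) = f i
      · left
        rcases hstep i with h | h
        · exact absurd hd.symm h.2
        · rw [hd] at h; exact h
      · right
        refine ⟨f (i + 1), ⟨hPstep i, fun h => hd h.symm⟩, ?_, hd⟩
        have := hchain (i + 1) j hij
        rwa [← hfij] at this
    · right
      push_neg at hrep
      have hinj : ∀ i j : ℕ, f i ∈ L → f j ∈ L → f i = f j → i = j := by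
        intro i j hi hj hfe
        rcases lt_trichotomy i j with h | h | h
        · exact absurd hfe (hrep i j h hi)
        · exact h
        · exact absurd hfe.symm (hrep j i h hj)
      set p : ℕ → Prop := fun n => f n ∈ L ∧ 1 ≤ n with hp
      have hpInf : (setOf p).Infinite := by
        have : setOf p = {i : ℕ | f i ∈ L} \ {0} := by
          ext n
          simp [hp, Nat.one_le_iff_ne_zero]
          exact Iff.rfl
        rw [this]
        exact hinf.diff (Set.finite_singleton 0)
      have hmem : ∀ k, p (Nat.nth p k) := fun k => Nat.nth_mem_of_infinite hpInf k
      have hmono : StrictMono (Nat.nth p) := Nat.nth_strictMono hpInf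
      refine ⟨fun k => match k with | 0 => f 0 | k + 1 => f (Nat.nth p k), ?_, hf0, ?_, ?_⟩
      · intro a b hab
        match a, b with
        | 0, 0 => rfl
        | 0, b + 1 =>
          exfalso
          simp only at hab
          have h0L : f 0 ∈ L := hab ▸ (hmem b).1
          have := hinj 0 (Nat.nth p b) h0L (hmem b).1 hab
          have := (hmem b).2
          omega
        | a + 1, 0 =>
          exfalso
          simp only at hab
          have h0L : f 0 ∈ L := hab ▸ (hmem a).1
          have := hinj (Nat.nth p a) 0 (hmem a).1 h0L hab
          have := (hmem a).2
          omega
        | a + 1, b + 1 =>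
          simp only at hab
          have := hinj _ _ (hmem a).1 (hmem b).1 hab
          have := hmono.injective this
          omega
      · intro i hi
        match i, hi with
        | k + 1, _ => exact (hmem k).1
      · intro i
        match i with
        | 0 => exact hchain 0 (Nat.nth p 0) (Nat.zero_le _)
        | k + 1 => exact hchain _ _ (le_of_lt (hmono (Nat.lt_succ_self k)))
  · rintro (⟨c₀, hc₀, c, hcL, hP0, hcc | ⟨d, ⟨hcd, hcdne⟩, hdc, hdcne⟩⟩ |
      ⟨g, hginj, hg0, hgL, hgP⟩)
    · -- (c,c) ∈ Δ
      refine ⟨fun n => if n = 0 then c₀ else c, by simp [hc₀], ?_, ?_⟩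
      · intro i
        match i with
        | 0 =>
          by_cases h : c₀ = c
          · right; simpa [h] using hcc
          · left; simpa using ⟨hP0, h⟩
        | k + 1 => right; simpa using hcc
      · apply Set.infinite_of_injective_forall_mem
          (f := fun k : ℕ => k + 1) (fun a b hab => by dsimp only at hab; omega) (fun a => by simp [hcL])
    · -- (c,d),(d,c) ∈ P \ Id
      by_cases h0 : c₀ = c
      · -- alternate c, d, c, d, ... starting at c
        refine ⟨fun n => if Even n then c else d, by simpa [h0] using hc₀, ?_, ?_⟩
        · intro i
          left
          rcases Nat.even_or_odd i with he | ho
          · have : ¬ Even (i + 1) := by simp [Nat.even_add_one, he]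
            simp [he, this]
            exact ⟨hcd, hcdne⟩
          · have he1 : Even (i + 1) := by simpa [Nat.even_add_one] using ho
            have : ¬ Even i := Nat.not_even_iff_odd.mpr ho
            simp [he1, this]
            exact ⟨hdc, hdcne⟩
        · refine Set.infinite_of_injective_forall_mem (f := fun k : ℕ => 2 * k)
            (fun a b hab => by dsimp only at hab; omega) (fun a => ?_)
          simp only [Set.mem_setOf_eq]
          have : Even (2 * a) := even_two_mul a
          simp [this, hcL]
      · -- c₀, c, d, c, d, ...
        refine ⟨fun n => if n = 0 then c₀ else if Odd n then c else d, by simp [hc₀], ?_, ?_⟩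
        · intro i
          left
          match i with
          | 0 => simpa using ⟨hP0, h0⟩
          | k + 1 =>
            rcases Nat.even_or_odd (k + 1) with he | ho
            · have ho2 : Odd (k + 2) := by
                rcases he with ⟨m, hm⟩; exact ⟨m, by omega⟩
              have : ¬ Odd (k + 1) := Nat.not_odd_iff_even.mpr he
              simp [this, ho2]
              exact ⟨hdc, hdcne⟩
            · have he2 : ¬ Odd (k + 2) := by
                rcases ho with ⟨m, hm⟩
                rintro ⟨m', hm'⟩; omega
              simp [ho, he2]
              exact ⟨hcd, hcdne⟩
        · refine Set.infinite_of_injective_forall_mem (f := fun k : ℕ => 2 * k + 1)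
            (fun a b hab => by dsimp only at hab; omega) (fun a => ?_)
          simp only [Set.mem_setOf_eq]
          have h1 : (2 * a + 1) ≠ 0 := by omega
          have h2 : Odd (2 * a + 1) := ⟨a, by omega⟩
          simp [h1, h2, hcL]
    · -- injective sequence
      refine ⟨g, hg0, ?_, ?_⟩
      · intro i
        left
        exact ⟨hgP i, fun h => by have := hginj h; omega⟩
      · exact Set.infinite_of_injective_forall_mem (f := fun k : ℕ => k + 1)
          (fun a b hab => by dsimp only at hab; omega) (fun a => hgL (a + 1) (by omega))
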